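/- Let a, b ∈ ℂ with |a| = 1 and conj(a)·b + conj(b) = 0, and let ψ, φ : ℂ → ℂ be entire functions with ψ not identically zero. If ψ(z)·e^{bu + φ(z)·(au + b)} = ψ(u)·e^{bφ(u) + z·(aφ(u) + b)} for all u, z ∈ ℂ, then there exist A, B ∈ ℂ such that φ(z) = Az + B for all z, and ψ(z) = ψ(0)·e^{(aB − bA + b)·z} for all z, with ψ(0) ≠ 0. -/

import Mathlib

open Complex ComplexConjugate

/-- the necessary condition for `C_{a,b,c}`-selfadjointness: the functional
equation on reproducing kernels forces `φ(z) = Az + B` and `ψ(z) = ψ(0) e^{(aB - bA + b)z}`. -/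
theorem cabc_selfadjoint_necessary (a b : ℂ) (ha : ‖a‖ = 1)
    (hab : conj a * b + conj b = 0)
    (ψ φ : ℂ → ℂ) (hψ : Differentiable ℂ ψ) (hφ : Differentiable ℂ φ)
    (hψne : ¬ ∀ z : ℂ, ψ z = 0)
    (heq : ∀ u z : ℂ, ψ z * Complex.exp (b * u + φ z * (a * u + b)) =
        ψ u * Complex.exp (b * φ u + z * (a * φ u + b))) :
    ∃ A B : ℂ, (∀ z : ℂ, φ z = A * z + B) ∧
      (∀ z : ℂ, ψ z = ψ 0 * Complex.exp ((a * B - b * A + b) * z)) ∧ ψ 0 ≠ 0 := by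
  have ha0 : a ≠ 0 := by
    intro h; rw [h] at ha; simp at ha
  -- the z = 0 specialization of the functional equation
  have hE2 : ∀ u : ℂ, ψ u * Complex.exp (b * φ u) =
      ψ 0 * Complex.exp (b * u + φ 0 * (a * u + b)) := by
    intro u
    have h := heq u 0
    simp only [zero_mul, add_zero] at h
    exact h.symm
  have hψ0 : ψ 0 ≠ 0 := by
    intro h0
    apply hψne
    intro u
    have h := hE2 u
    rw [h0, zero_mul] at h
    exact (mul_eq_zero.mp h).resolve_right (Complex.exp_ne_zero _)
  have hψ_eq : ∀ u : ℂ, ψ u = ψ 0 * Complex.exp (b * u + φ 0 * (a * u + b) - b * φ u) := by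
    intro u
    rw [Complex.exp_sub]
    field_simp
    have h := hE2 u
    ring_nf at h ⊢
    linear_combination h
  have key : ∀ u z : ℂ, Complex.exp (a * u * φ z - a * u * φ 0)
      = Complex.exp (a * z * φ u - a * z * φ 0) := by
    intro u z
    have h := heq u z
    rw [hψ_eq z, hψ_eq u, mul_assoc, mul_assoc, ← Complex.exp_add, ← Complex.exp_add] at h
    have h' := mul_left_cancel₀ hψ0 h
    have h2 : Complex.exp (a * u * φ z - a * u * φ 0)
          * Complex.exp (b * z + b * u + b * φ 0 + a * z * φ 0 + a * u * φ 0)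
        = Complex.exp (a * z * φ u - a * z * φ 0)
          * Complex.exp (b * z + b * u + b * φ 0 + a * z * φ 0 + a * u * φ 0) := by
      rw [← Complex.exp_add, ← Complex.exp_add]
      convert h' using 2 <;> ring
    exact mul_right_cancel₀ (Complex.exp_ne_zero _) h2
  have hfun : (fun w : ℂ => Complex.exp (a * φ w - a * φ 0)) =
      fun w : ℂ => Complex.exp (a * (φ 1 - φ 0) * w) := by
    funext w
    have h := key 1 w
    convert h using 2 <;> ring
  have hderiv : ∀ z : ℂ, deriv φ z = φ 1 - φ 0 := by
    intro z
    have hd1 : HasDerivAt (fun w : ℂ => Complex.exp (a * φ w - a * φ 0))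
        (Complex.exp (a * φ z - a * φ 0) * (a * deriv φ z)) z :=
      ((((hφ z).hasDerivAt).const_mul a).sub_const (a * φ 0)).cexp
    have hd2 : HasDerivAt (fun w : ℂ => Complex.exp (a * (φ 1 - φ 0) * w))
        (Complex.exp (a * (φ 1 - φ 0) * z) * (a * (φ 1 - φ 0))) z := by
      have := ((hasDerivAt_id z).const_mul (a * (φ 1 - φ 0))).cexp
      simpa using this
    rw [hfun] at hd1
    have huniq := hd1.unique hd2
    have hE := congrFun hfun z
    rw [hE] at huniq
    have h1 := mul_left_cancel₀ (Complex.exp_ne_zero _) huniq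
    exact mul_left_cancel₀ ha0 h1
  have hlin : ∀ z : ℂ, φ z = (φ 1 - φ 0) * z + φ 0 := by
    have hc : ∀ x : ℂ, deriv (fun w => φ w - (φ 1 - φ 0) * w) x = 0 := by
      intro x
      have hd : HasDerivAt (fun w => φ w - (φ 1 - φ 0) * w)
          (deriv φ x - (φ 1 - φ 0) * 1) x :=
        (hφ x).hasDerivAt.sub ((hasDerivAt_id x).const_mul _)
      rw [hd.deriv, hderiv x]; ring
    intro z
    have h := is_const_of_deriv_eq_zero
      (hφ.sub (differentiable_id.const_mul _)) hc z 0
    simp only [Pi.sub_apply, id_eq, mul_zero, sub_zero] at h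
    linear_combination h
  refine ⟨φ 1 - φ 0, φ 0, hlin, ?_, hψ0⟩
  intro z
  apply mul_right_cancel₀ (Complex.exp_ne_zero (b * φ z))
  rw [hE2 z, mul_assoc, ← Complex.exp_add]
  congr 1
  rw [hlin z]
  ring
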